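/- Let P = {P_i} be a complete family of orthogonal projectors and ρ a density matrix. If 0 < α₁ ≤ α₂ < 1, then Σ_i Tr[(P_i ρ^{α₁} P_i)^{1/α₁}] ≤ Σ_i Tr[(P_i ρ^{α₂} P_i)^{1/α₂}]; equivalently, with C_{α,1}(ρ,P) = 1 − Σ_i Tr[(P_i ρ^{α} P_i)^{1/α}], one has C_{α₁,1}(ρ,P) ≥ C_{α₂,1}(ρ,P). -/

import Mathlib

set_option maxHeartbeats 1000000


open Matrix
open scoped ComplexOrder Classical

namespace BlockCoherence

variable {n : Type*} [Fintype n] [DecidableEq n]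

/-- Real part of the trace of a complex matrix. -/
noncomputable def retr (A : Matrix n n ℂ) : ℝ := (Matrix.trace A).re

/-- A density matrix: positive semidefinite with trace 1. -/
def IsDensityMatrix (ρ : Matrix n n ℂ) : Prop := ρ.PosSemidef ∧ Matrix.trace ρ = 1

/-- A complete family of orthogonal projectors. -/
def IsProjFamily {K : Type*} [Fintype K] (P : K → Matrix n n ℂ) : Prop :=
  (∀ k, (P k).IsHermitian) ∧ (∀ k, P k * P k = P k) ∧
    (∀ j k, j ≠ k → P j * P k = 0) ∧ (∑ k, P k = 1)

/-- Block dephasing map Δ(ρ) = Σ_k P_k ρ P_k. -/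
noncomputable def deph {K : Type*} [Fintype K] (P : K → Matrix n n ℂ)
    (ρ : Matrix n n ℂ) : Matrix n n ℂ := ∑ k, P k * ρ * P k

/-- Block incoherent (free) states. -/
def IsBlockIncoherent {K : Type*} [Fintype K] (P : K → Matrix n n ℂ)
    (σ : Matrix n n ℂ) : Prop := IsDensityMatrix σ ∧ σ = deph P σ

/-- A block-incoherent operation presented by its Kraus operators. -/
def IsBIOp {K : Type*} [Fintype K] {N : Type*} [Fintype N]
    (P : K → Matrix n n ℂ) (Kr : N → Matrix n n ℂ) : Prop :=
  (∑ m, (Kr m)ᴴ * Kr m = 1) ∧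
    ∀ (m : N) (i j : K), i ≠ j → ∀ σ, IsBlockIncoherent P σ →
      P i * (Kr m * σ * (Kr m)ᴴ) * P j = 0

/-- The channel determined by Kraus operators. -/
noncomputable def krausApply {N : Type*} [Fintype N]
    (Kr : N → Matrix n n ℂ) (ρ : Matrix n n ℂ) : Matrix n n ℂ :=
  ∑ m, Kr m * ρ * (Kr m)ᴴ

/-- A block coherence measure: conditions (B1)-(B4). -/
structure IsBlockCoherenceMeasure {K : Type*} [Fintype K] (P : K → Matrix n n ℂ)
    (C : Matrix n n ℂ → ℝ) : Prop where
  nonneg : ∀ ρ, IsDensityMatrix ρ → 0 ≤ C ρ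
  eq_zero_iff : ∀ ρ, IsDensityMatrix ρ → (C ρ = 0 ↔ IsBlockIncoherent P ρ)
  monotone : ∀ ρ, IsDensityMatrix ρ → ∀ {N : Type} [Fintype N] (Kr : N → Matrix n n ℂ),
    IsBIOp P Kr → C (krausApply Kr ρ) ≤ C ρ
  strong_monotone : ∀ ρ, IsDensityMatrix ρ → ∀ {N : Type} [Fintype N] (Kr : N → Matrix n n ℂ),
    IsBIOp P Kr →
      ∑ m, (if retr (Kr m * ρ * (Kr m)ᴴ) = 0 then (0 : ℝ) else
        retr (Kr m * ρ * (Kr m)ᴴ) *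
          C ((retr (Kr m * ρ * (Kr m)ᴴ))⁻¹ • (Kr m * ρ * (Kr m)ᴴ))) ≤ C ρ
  convex : ∀ {N : Type} [Fintype N] (p : N → ℝ) (ρs : N → Matrix n n ℂ),
    (∀ m, 0 ≤ p m) → ∑ m, p m = 1 → (∀ m, IsDensityMatrix (ρs m)) →
      C (∑ m, p m • ρs m) ≤ ∑ m, p m * C (ρs m)

/-- Real power of a matrix via the spectral functional calculus (0 on non-Hermitian input). -/
noncomputable def mpow (A : Matrix n n ℂ) (t : ℝ) : Matrix n n ℂ :=
  if hA : A.IsHermitian then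
    (hA.eigenvectorUnitary : Matrix n n ℂ) *
      Matrix.diagonal (fun i => ((hA.eigenvalues i ^ t : ℝ) : ℂ)) *
      (star (hA.eigenvectorUnitary : Matrix n n ℂ))
  else 0

/-- Positive semidefinite square root (0 on non-PSD input). -/
noncomputable def msqrt (A : Matrix n n ℂ) : Matrix n n ℂ :=
  if hA : A.PosSemidef then
    (hA.1.eigenvectorUnitary : Matrix n n ℂ) *
      Matrix.diagonal ((↑) ∘ (fun x : ℝ => Real.sqrt x) ∘ hA.1.eigenvalues) *
      (star (hA.1.eigenvectorUnitary : Matrix n n ℂ))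
  else 0

/-- Base-2 matrix logarithm via spectral calculus, with the convention log 0 = 0. -/
noncomputable def mlog2 (A : Matrix n n ℂ) : Matrix n n ℂ :=
  if hA : A.IsHermitian then
    (hA.eigenvectorUnitary : Matrix n n ℂ) *
      Matrix.diagonal (fun i => ((Real.logb 2 (hA.eigenvalues i) : ℝ) : ℂ)) *
      (star (hA.eigenvectorUnitary : Matrix n n ℂ))
  else 0

/-- Trace norm ‖M‖_Tr = Tr √(MᴴM). -/
noncomputable def trNorm (M : Matrix n n ℂ) : ℝ :=
  retr (msqrt (Mᴴ * M))

/-- The α-z Rényi block coherence measure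
`C_{α,z}(ρ,P) = 1 - (max_{σ∈I_B} Tr[(σ^{(1-α)/(2z)} ρ^{α/z} σ^{(1-α)/(2z)})^z])^{1/α}`. -/
noncomputable def Caz {K : Type*} [Fintype K] (α z : ℝ) (P : K → Matrix n n ℂ)
    (ρ : Matrix n n ℂ) : ℝ :=
  1 - (sSup {x : ℝ | ∃ σ, IsBlockIncoherent P σ ∧
    x = retr (mpow (mpow σ ((1 - α) / (2 * z)) * mpow ρ (α / z) *
      mpow σ ((1 - α) / (2 * z))) z)}) ^ (1 / α)


/- auxiliary lemmas -/
lemma quad_conj {m : Type*} [Fintype m] (M : Matrix n n ℂ) (B : Matrix n m ℂ) (c : m → ℂ) :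
    star (B *ᵥ c) ⬝ᵥ M *ᵥ (B *ᵥ c) = star c ⬝ᵥ (Bᴴ * M * B) *ᵥ c := by
  simp [star_mulVec, dotProduct_mulVec, vecMul_vecMul, Matrix.mul_assoc]

lemma norm_conj {m : Type*} [Fintype m] (B : Matrix n m ℂ) (c : m → ℂ) :
    star (B *ᵥ c) ⬝ᵥ (B *ᵥ c) = star c ⬝ᵥ (Bᴴ * B) *ᵥ c := by
  simp [star_mulVec, dotProduct_mulVec, vecMul_vecMul]

lemma diag_quad (w : n → ℝ) (c : n → ℂ) :
    star c ⬝ᵥ (diagonal (fun j => (w j : ℂ))) *ᵥ c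
      = ((∑ j, w j * Complex.normSq (c j) : ℝ) : ℂ) := by
  push_cast
  simp only [dotProduct, mulVec_diagonal, Pi.star_apply, Complex.star_def]
  congr 1; ext j
  rw [Complex.normSq_eq_conj_mul_self]; ring

lemma norm_quad (c : n → ℂ) :
    star c ⬝ᵥ c = ((∑ j, Complex.normSq (c j) : ℝ) : ℂ) := by
  push_cast
  simp only [dotProduct, Pi.star_apply, Complex.star_def]
  congr 1; ext j
  rw [Complex.normSq_eq_conj_mul_self]

lemma eig_dominate {X Y : Matrix n n ℂ} (hX : X.IsHermitian) (hY : Y.IsHermitian)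
    (φ : ℝ → ℝ) (hφ : Monotone φ)
    (h : ∀ u : n → ℂ, star u ⬝ᵥ u = 1 →
      (star u ⬝ᵥ X *ᵥ u).re ≤ φ ((star u ⬝ᵥ Y *ᵥ u).re))
    (ψ : ℝ → ℝ) (hψ : Monotone ψ) :
    ∑ j, ψ (hX.eigenvalues j) ≤ ∑ j, ψ (φ (hY.eigenvalues j)) := by
  classical
  have hsort : ∀ (μ : n → ℝ), ∃ σ : Fin (Fintype.card n) ≃ n,
      ∀ i j : Fin (Fintype.card n), i ≤ j → μ (σ j) ≤ μ (σ i) := by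
    intro μ
    refine ⟨((Tuple.sort (fun i => -μ ((Fintype.equivFin n).symm i)) :
        Equiv.Perm (Fin (Fintype.card n)))).trans (Fintype.equivFin n).symm, ?_⟩
    intro i j hij
    have := Tuple.monotone_sort (fun i => -μ ((Fintype.equivFin n).symm i)) hij
    simp only [Function.comp_apply] at this
    simp only [Equiv.trans_apply]
    linarith
  obtain ⟨σ, hσ⟩ := hsort hX.eigenvalues
  obtain ⟨τ, hτ⟩ := hsort hY.eigenvalues
  have key_m : ∀ m : Fin (Fintype.card n),
      hX.eigenvalues (σ m) ≤ φ (hY.eigenvalues (τ m)) := by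
    intro m
    have hmlt : (m : ℕ) < Fintype.card n := m.isLt
    set μ := hX.eigenvalues with hμdef
    set ν := hY.eigenvalues with hνdef
    set U : Matrix n n ℂ := (hX.eigenvectorUnitary : Matrix n n ℂ) with hUdef
    set W : Matrix n n ℂ := (hY.eigenvectorUnitary : Matrix n n ℂ) with hWdef
    have hU1 : U * Uᴴ = 1 := by
      rw [← star_eq_conjTranspose]
      exact mem_unitaryGroup_iff.mp (hX.eigenvectorUnitary).2
    have hU2 : Uᴴ * U = 1 := by
      rw [← star_eq_conjTranspose]
      exact mem_unitaryGroup_iff'.mp (hX.eigenvectorUnitary).2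
    have hW1 : W * Wᴴ = 1 := by
      rw [← star_eq_conjTranspose]
      exact mem_unitaryGroup_iff.mp (hY.eigenvectorUnitary).2
    have hDX : Uᴴ * X * U = diagonal (fun j => (μ j : ℂ)) := by
      rw [← star_eq_conjTranspose]
      have h := hX.conjStarAlgAut_star_eigenvectorUnitary
      rw [Unitary.conjStarAlgAut_apply, Unitary.coe_star, star_star] at h
      exact h
    have hDY : Y = W * diagonal (fun j => (ν j : ℂ)) * Wᴴ := by
      rw [← star_eq_conjTranspose]
      exact hY.spectral_theorem
    set emb1 : Fin ((m : ℕ) + 1) → Fin (Fintype.card n) :=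
      (fun i => ⟨(i : ℕ), by have := i.isLt; omega⟩) with hemb1
    set E : Matrix n (Fin ((m:ℕ)+1)) ℂ :=
      Matrix.of (fun j i => if j = σ (emb1 i) then 1 else 0) with hEdef
    have hE1 : ∀ (c : Fin ((m:ℕ)+1) → ℂ) (i₀), (E *ᵥ c) (σ (emb1 i₀)) = c i₀ := by
      intro c i₀
      simp only [mulVec, dotProduct, hEdef, Matrix.of_apply]
      rw [Finset.sum_eq_single i₀]
      · simp
      · intro b _ hb
        rw [if_neg, zero_mul]
        intro hEq
        apply hb
        have h2 : emb1 i₀ = emb1 b := σ.injective hEq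
        have h3 := congrArg Fin.val h2
        simp only [hemb1] at h3
        exact Fin.ext h3.symm
      · intro hne
        exact absurd (Finset.mem_univ i₀) hne
    have hE2 : ∀ (c : Fin ((m:ℕ)+1) → ℂ) (j : n),
        ¬ ((σ.symm j : ℕ) ≤ (m:ℕ)) → (E *ᵥ c) j = 0 := by
      intro c j hj
      simp only [mulVec, dotProduct, hEdef, Matrix.of_apply]
      apply Finset.sum_eq_zero
      intro i _
      rw [if_neg, zero_mul]
      intro hEq
      apply hj
      have h2 : σ.symm j = emb1 i := by rw [hEq, Equiv.symm_apply_apply]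
      have h3 : ((σ.symm j : Fin (Fintype.card n)) : ℕ) = (i : ℕ) := by rw [h2]
      rw [h3]
      have := i.isLt
      omega
    set F : Matrix (Fin (m:ℕ)) (Fin ((m:ℕ)+1)) ℂ :=
      Matrix.of (fun i i' => (Wᴴ * (U * E)) (τ ⟨(i:ℕ), by have := i.isLt; omega⟩) i') with hFdef
    obtain ⟨c, hc0, hFc⟩ : ∃ c, c ≠ 0 ∧ F *ᵥ c = 0 := by
      by_contra hcon
      push_neg at hcon
      have hinj : Function.Injective F.mulVecLin := by
        rw [← LinearMap.ker_eq_bot, LinearMap.ker_eq_bot']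
        intro c hc
        by_contra hne
        exact hcon c hne (by simpa using hc)
      have hle := LinearMap.finrank_le_finrank_of_injective hinj
      simp [Module.finrank_pi] at hle
    set xc := E *ᵥ c with hxc
    set u := U *ᵥ xc with hu
    set s := ∑ j, Complex.normSq (xc j) with hs
    have hspos : 0 < s := by
      obtain ⟨i₀, hi₀⟩ := Function.ne_iff.mp hc0
      apply Finset.sum_pos' (fun j _ => Complex.normSq_nonneg _)
      refine ⟨σ (emb1 i₀), Finset.mem_univ _, ?_⟩
      rw [hxc, hE1 c i₀]
      exact Complex.normSq_pos.mpr hi₀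
    have hnormu : star u ⬝ᵥ u = (s : ℂ) := by
      rw [hu, norm_conj, hU2, Matrix.one_mulVec, norm_quad]
    set d := Wᴴ *ᵥ u with hd
    have hd0 : ∀ i : Fin (m:ℕ), d (τ ⟨(i:ℕ), by have := i.isLt; omega⟩) = 0 := by
      intro i
      have h2 : d = (Wᴴ * (U * E)) *ᵥ c := by
        rw [hd, hu, hxc, mulVec_mulVec, mulVec_mulVec, Matrix.mul_assoc]
      rw [h2]
      have h3 := congrFun hFc i
      simpa [hFdef, mulVec, dotProduct] using h3
    have hnormd : ∑ j, Complex.normSq (d j) = s := by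
      have h1 : star d ⬝ᵥ d = (s:ℂ) := by
        rw [hd, norm_conj, conjTranspose_conjTranspose, hW1, Matrix.one_mulVec]
        exact hnormu
      have h2 := norm_quad d
      rw [h1] at h2
      exact_mod_cast h2.symm
    have hqX : (star u ⬝ᵥ X *ᵥ u) = ((∑ j, μ j * Complex.normSq (xc j) : ℝ) : ℂ) := by
      rw [hu, quad_conj, hDX, diag_quad]
    have hqY : (star u ⬝ᵥ Y *ᵥ u) = ((∑ j, ν j * Complex.normSq (d j) : ℝ) : ℂ) := by
      have h1 : star d ⬝ᵥ (diagonal fun j => ((ν j : ℝ) : ℂ)) *ᵥ d = star u ⬝ᵥ Y *ᵥ u := by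
        rw [hd, quad_conj, conjTranspose_conjTranspose, ← hDY]
      rw [← h1, diag_quad]
    have boundX : μ (σ m) * s ≤ ∑ j, μ j * Complex.normSq (xc j) := by
      rw [hs, Finset.mul_sum]
      apply Finset.sum_le_sum
      intro j _
      by_cases hz : xc j = 0
      · simp [hz]
      · have hj : ((σ.symm j : Fin (Fintype.card n)) : ℕ) ≤ (m:ℕ) := by
          by_contra hcon'
          exact hz (by rw [hxc]; exact hE2 c j hcon')
        have hle : μ (σ m) ≤ μ (σ (σ.symm j)) := hσ _ _ (by exact hj)
        rw [Equiv.apply_symm_apply] at hle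
        exact mul_le_mul_of_nonneg_right hle (Complex.normSq_nonneg _)
    have boundY : ∑ j, ν j * Complex.normSq (d j) ≤ ν (τ m) * s := by
      rw [← hnormd, Finset.mul_sum]
      apply Finset.sum_le_sum
      intro j _
      by_cases hz : d j = 0
      · simp [hz]
      · have hgood : (m:ℕ) ≤ ((τ.symm j : Fin (Fintype.card n)) : ℕ) := by
          by_contra hcon'
          push_neg at hcon'
          apply hz
          have h4 := hd0 ⟨((τ.symm j : Fin (Fintype.card n)) : ℕ), hcon'⟩
          have h5 : (⟨((τ.symm j : Fin (Fintype.card n)) : ℕ), by omega⟩ :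
              Fin (Fintype.card n)) = τ.symm j := by
            apply Fin.ext; rfl
          rw [h5, Equiv.apply_symm_apply] at h4
          exact h4
        have hle : ν (τ (τ.symm j)) ≤ ν (τ m) := hτ _ _ (by exact hgood)
        rw [Equiv.apply_symm_apply] at hle
        exact mul_le_mul_of_nonneg_right hle (Complex.normSq_nonneg _)
    set t : ℝ := Real.sqrt s with ht
    have htpos : 0 < t := Real.sqrt_pos.mpr hspos
    set v := ((t⁻¹ : ℝ) : ℂ) • u with hv
    have hstar : star v = ((t⁻¹ : ℝ) : ℂ) • star u := by
      rw [hv, star_smul]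
      congr 1
      simp [Complex.star_def, Complex.conj_ofReal]
    have hquad : ∀ M : Matrix n n ℂ, star v ⬝ᵥ M *ᵥ v
        = ((t⁻¹ * t⁻¹ : ℝ) : ℂ) * (star u ⬝ᵥ M *ᵥ u) := by
      intro M
      rw [hv, hstar, mulVec_smul, smul_dotProduct, dotProduct_smul, smul_eq_mul, smul_eq_mul]
      push_cast
      ring
    have hinv : t⁻¹ * t⁻¹ * s = 1 := by
      rw [ht, ← Real.sqrt_inv]
      rw [Real.mul_self_sqrt (inv_nonneg.mpr hspos.le)]
      field_simp
    have hunit : star v ⬝ᵥ v = 1 := by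
      rw [hv, hstar, smul_dotProduct, dotProduct_smul, hnormu, smul_eq_mul, smul_eq_mul,
        ← mul_assoc]
      exact_mod_cast congrArg (Complex.ofReal) hinv
    have h1 : (star v ⬝ᵥ X *ᵥ v).re
        = (t⁻¹ * t⁻¹) * (∑ j, μ j * Complex.normSq (xc j)) := by
      rw [hquad X, hqX, ← Complex.ofReal_mul]
      exact Complex.ofReal_re _
    have h2 : (star v ⬝ᵥ Y *ᵥ v).re
        = (t⁻¹ * t⁻¹) * (∑ j, ν j * Complex.normSq (d j)) := by
      rw [hquad Y, hqY, ← Complex.ofReal_mul]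
      exact Complex.ofReal_re _
    have hXlow : μ (σ m) ≤ (star v ⬝ᵥ X *ᵥ v).re := by
      rw [h1]
      calc μ (σ m) = (t⁻¹ * t⁻¹) * (μ (σ m) * s) := by
            rw [show (t⁻¹ * t⁻¹) * (μ (σ m) * s) = t⁻¹ * t⁻¹ * s * μ (σ m) from by ring,
              hinv, one_mul]
        _ ≤ (t⁻¹ * t⁻¹) * ∑ j, μ j * Complex.normSq (xc j) := by
            apply mul_le_mul_of_nonneg_left boundX
            positivity
    have hYup : (star v ⬝ᵥ Y *ᵥ v).re ≤ ν (τ m) := by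
      rw [h2]
      calc (t⁻¹ * t⁻¹) * (∑ j, ν j * Complex.normSq (d j))
          ≤ (t⁻¹ * t⁻¹) * (ν (τ m) * s) := by
            apply mul_le_mul_of_nonneg_left boundY
            positivity
        _ = ν (τ m) := by
            rw [show (t⁻¹ * t⁻¹) * (ν (τ m) * s) = t⁻¹ * t⁻¹ * s * ν (τ m) from by ring,
              hinv, one_mul]
    calc μ (σ m) ≤ (star v ⬝ᵥ X *ᵥ v).re := hXlow
      _ ≤ φ ((star v ⬝ᵥ Y *ᵥ v).re) := h v hunit
      _ ≤ φ (ν (τ m)) := hφ hYup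
  calc ∑ j, ψ (hX.eigenvalues j)
      = ∑ i, ψ (hX.eigenvalues (σ i)) :=
        (Equiv.sum_comp σ (fun j => ψ (hX.eigenvalues j))).symm
    _ ≤ ∑ i, ψ (φ (hY.eigenvalues (τ i))) :=
        Finset.sum_le_sum fun i _ => hψ (key_m i)
    _ = ∑ j, ψ (φ (hY.eigenvalues j)) :=
        Equiv.sum_comp τ (fun j => ψ (φ (hY.eigenvalues j)))

lemma mpow_eq_cfc {A : Matrix n n ℂ} (hA : A.IsHermitian) (t : ℝ) :
    mpow A t = cfc (fun x : ℝ => x ^ t) A := by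
  rw [hA.cfc_eq, mpow, dif_pos hA]
  rfl

lemma posSemidef_mpow {ρ : Matrix n n ℂ} (hρ : ρ.PosSemidef) (t : ℝ) :
    (mpow ρ t).PosSemidef := by
  rw [mpow, dif_pos hρ.1]
  have hd : Matrix.PosSemidef (Matrix.diagonal
      (fun i => ((hρ.1.eigenvalues i ^ t : ℝ) : ℂ))) := by
    rw [Matrix.posSemidef_diagonal_iff]
    intro i
    rw [Complex.zero_le_real]
    exact Real.rpow_nonneg (hρ.eigenvalues_nonneg i) t
  have := hd.mul_mul_conjTranspose_same (hρ.1.eigenvectorUnitary : Matrix n n ℂ)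
  rwa [star_eq_conjTranspose]

lemma spectrum_nonneg_of_posSemidef {ρ : Matrix n n ℂ} (hρ : ρ.PosSemidef) :
    ∀ x ∈ spectrum ℝ ρ, 0 ≤ x := by
  intro x hx
  rw [Matrix.IsHermitian.spectrum_real_eq_range_eigenvalues hρ.1] at hx
  obtain ⟨i, rfl⟩ := hx
  exact hρ.eigenvalues_nonneg i

lemma mpow_mpow {ρ : Matrix n n ℂ} (hρ : ρ.PosSemidef) {a b : ℝ} (ha : 0 < a) (hb : 0 < b) :
    mpow (mpow ρ a) b = mpow ρ (a * b) := by
  have hherm : ρ.IsHermitian := hρ.1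
  have hsa : IsSelfAdjoint ρ := hherm
  have hP : (mpow ρ a).PosSemidef := posSemidef_mpow hρ a
  have hf : ContinuousOn (fun x : ℝ => x ^ a) (spectrum ℝ ρ) :=
    fun x _ => (Real.continuousAt_rpow_const x a (Or.inr ha.le)).continuousWithinAt
  have hg : ContinuousOn (fun x : ℝ => x ^ b)
      ((fun x : ℝ => x ^ a) '' (spectrum ℝ ρ)) :=
    fun x _ => (Real.continuousAt_rpow_const x b (Or.inr hb.le)).continuousWithinAt
  calc mpow (mpow ρ a) b
      = cfc (fun x : ℝ => x ^ b) (cfc (fun x : ℝ => x ^ a) ρ) := by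
        rw [mpow_eq_cfc hP.1 b, mpow_eq_cfc hherm a]
    _ = cfc ((fun x : ℝ => x ^ b) ∘ (fun x : ℝ => x ^ a)) ρ :=
        (cfc_comp (fun x : ℝ => x ^ b) (fun x : ℝ => x ^ a) ρ hsa hg hf).symm
    _ = cfc (fun x : ℝ => x ^ (a * b)) ρ := by
        apply cfc_congr
        intro x hx
        have hx0 : 0 ≤ x := spectrum_nonneg_of_posSemidef hρ x hx
        simp only [Function.comp_apply]
        rw [← Real.rpow_mul hx0]
    _ = mpow ρ (a * b) := (mpow_eq_cfc hherm _).symm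

lemma retr_mpow {M : Matrix n n ℂ} (hM : M.IsHermitian) (t : ℝ) :
    retr (mpow M t) = ∑ j, (hM.eigenvalues j) ^ t := by
  rw [retr, mpow, dif_pos hM, Matrix.trace_mul_comm, ← Matrix.mul_assoc]
  have h1 : star (hM.eigenvectorUnitary : Matrix n n ℂ) *
      (hM.eigenvectorUnitary : Matrix n n ℂ) = 1 :=
    mem_unitaryGroup_iff'.mp (hM.eigenvectorUnitary).2
  rw [h1, one_mul, Matrix.trace_diagonal]
  simp

lemma jensen_rpow (p d : n → ℝ) (hp : ∀ j, 0 ≤ p j) (hd : ∀ j, 0 ≤ d j)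
    (hsum : ∑ j, p j ≤ 1) {r : ℝ} (hr0 : 0 < r) (hr1 : r ≤ 1) :
    ∑ j, p j * d j ^ r ≤ (∑ j, p j * d j) ^ r := by
  set T := ∑ j, p j with hT
  rcases eq_or_lt_of_le (Finset.sum_nonneg (fun j _ => hp j) : (0:ℝ) ≤ T) with h0 | hTpos
  · have hz : ∀ j ∈ Finset.univ, p j = 0 := by
      intro j hj
      exact ((Finset.sum_eq_zero_iff_of_nonneg (fun j _ => hp j)).mp h0.symm) j hj
    have h1 : ∑ j, p j * d j ^ r = 0 :=
      Finset.sum_eq_zero fun j hj => by rw [hz j hj, zero_mul]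
    have h2 : ∑ j, p j * d j = 0 :=
      Finset.sum_eq_zero fun j hj => by rw [hz j hj, zero_mul]
    rw [h1, h2, Real.zero_rpow hr0.ne']
  · set w : n → ℝ := fun j => p j / T with hw
    have hwnn : ∀ j ∈ Finset.univ, 0 ≤ w j := fun j _ => div_nonneg (hp j) hTpos.le
    have hwsum : ∑ j ∈ Finset.univ, w j = 1 := by
      rw [hw, ← Finset.sum_div]
      exact div_self hTpos.ne'
    have hinv : 1 ≤ 1 / r := by
      rw [le_div_iff₀ hr0]; linarith
    have step1 := Real.rpow_arith_mean_le_arith_mean_rpow Finset.univ w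
      (fun j => d j ^ r) hwnn hwsum (fun j _ => Real.rpow_nonneg (hd j) r) hinv
    have hid : ∀ j, (d j ^ r) ^ (1/r) = d j := by
      intro j
      rw [← Real.rpow_mul (hd j), mul_one_div, div_self hr0.ne', Real.rpow_one]
    rw [show ∑ j, w j * (d j ^ r) ^ (1/r) = ∑ j, w j * d j from
      Finset.sum_congr rfl (fun j _ => by rw [hid j])] at step1
    set X := ∑ j, w j * d j ^ r with hX
    set Y := ∑ j, w j * d j with hY
    have hXnn : 0 ≤ X := Finset.sum_nonneg fun j _ =>
      mul_le_mul_of_nonneg_left (Real.rpow_nonneg (hd j) r) (hwnn j (Finset.mem_univ j)) |>.trans_eq' (by rw [mul_zero])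
    have step2 : X ≤ Y ^ r := by
      have hX' : X = (X ^ (1/r)) ^ r := by
        rw [← Real.rpow_mul hXnn, one_div_mul_cancel hr0.ne', Real.rpow_one]
      rw [hX']
      exact Real.rpow_le_rpow (Real.rpow_nonneg hXnn _) step1 hr0.le
    have hYnn : 0 ≤ Y := Finset.sum_nonneg fun j _ =>
      mul_nonneg (hwnn j (Finset.mem_univ j)) (hd j)
    have hpw : ∀ j, p j = T * w j := by
      intro j; rw [hw]; field_simp
      exact (mul_div_cancel_right₀ (p j) hTpos.ne').symm
    have e1 : ∑ j, p j * d j ^ r = T * X := by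
      rw [hX, Finset.mul_sum]
      exact Finset.sum_congr rfl fun j _ => by rw [hpw j]; ring
    have e2 : ∑ j, p j * d j = T * Y := by
      rw [hY, Finset.mul_sum]
      exact Finset.sum_congr rfl fun j _ => by rw [hpw j]; ring
    rw [e1, e2]
    calc T * X ≤ T * Y ^ r := mul_le_mul_of_nonneg_left step2 hTpos.le
      _ ≤ T ^ r * Y ^ r := by
          apply mul_le_mul_of_nonneg_right _ (Real.rpow_nonneg hYnn r)
          calc T = T ^ (1:ℝ) := (Real.rpow_one T).symm
            _ ≤ T ^ r := Real.rpow_le_rpow_of_exponent_ge hTpos hsum hr1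
      _ = (T * Y) ^ r := (Real.mul_rpow hTpos.le hYnn).symm

lemma quad_hyp {A : Matrix n n ℂ} (hA : A.PosSemidef) {P : Matrix n n ℂ}
    (hP1 : P.IsHermitian) (hP2 : P * P = P) {r : ℝ} (hr0 : 0 < r) (hr1 : r ≤ 1)
    (u : n → ℂ) (hu : star u ⬝ᵥ u = 1) :
    (star u ⬝ᵥ (P * mpow A r * P) *ᵥ u).re ≤
      ((star u ⬝ᵥ (P * A * P) *ᵥ u).re ⊔ 0) ^ r := by
  classical
  set U : Matrix n n ℂ := (hA.1.eigenvectorUnitary : Matrix n n ℂ) with hU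
  set g : n → ℝ := hA.1.eigenvalues with hg
  have hU1 : U * Uᴴ = 1 := by
    rw [← star_eq_conjTranspose]
    exact mem_unitaryGroup_iff.mp (hA.1.eigenvectorUnitary).2
  set w : n → ℂ := P *ᵥ u with hw
  have hquadP : ∀ M : Matrix n n ℂ,
      star u ⬝ᵥ (P * M * P) *ᵥ u = star w ⬝ᵥ M *ᵥ w := by
    intro M
    have h := quad_conj M P u
    rw [hP1] at h
    exact h.symm
  set z : n → ℂ := Uᴴ *ᵥ w with hz
  have hUconj : ∀ (v : n → ℝ),
      star w ⬝ᵥ (U * diagonal (fun j => ((v j : ℝ) : ℂ)) * Uᴴ) *ᵥ w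
        = ((∑ j, v j * Complex.normSq (z j) : ℝ) : ℂ) := by
    intro v
    have h := quad_conj (diagonal fun j => ((v j : ℝ) : ℂ)) (Uᴴ) w
    rw [conjTranspose_conjTranspose] at h
    rw [← h, hz, diag_quad]
  have hAr : mpow A r = U * diagonal (fun j => ((g j ^ r : ℝ) : ℂ)) * Uᴴ := by
    rw [mpow, dif_pos hA.1, star_eq_conjTranspose]
  have hAspec : A = U * diagonal (fun j => ((g j : ℝ) : ℂ)) * Uᴴ := by
    rw [← star_eq_conjTranspose]
    exact hA.1.spectral_theorem
  have e1 : (star u ⬝ᵥ (P * mpow A r * P) *ᵥ u).re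
      = ∑ j, g j ^ r * Complex.normSq (z j) := by
    rw [hquadP, hAr, hUconj (fun j => g j ^ r)]
    exact Complex.ofReal_re _
  have e2 : (star u ⬝ᵥ (P * A * P) *ᵥ u).re
      = ∑ j, g j * Complex.normSq (z j) := by
    conv_lhs => rw [hquadP, hAspec, hUconj g]
    exact Complex.ofReal_re _
  have hnz : star z ⬝ᵥ z = star u ⬝ᵥ P *ᵥ u := by
    have h1 := norm_conj (Uᴴ) w
    rw [conjTranspose_conjTranspose, hU1, one_mulVec] at h1
    have h2 := norm_conj P u
    rw [hP1, hP2] at h2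
    rw [hz, h1, hw, h2]
  have hQherm : ((1 : Matrix n n ℂ) - P)ᴴ * (1 - P) = 1 - P := by
    rw [conjTranspose_sub, conjTranspose_one, hP1, Matrix.sub_mul, Matrix.mul_sub,
      Matrix.mul_sub, one_mul, mul_one, hP2, one_mul]
    abel
  have hPle : (star u ⬝ᵥ P *ᵥ u).re ≤ 1 := by
    have h3 := norm_conj ((1 : Matrix n n ℂ) - P) u
    rw [hQherm] at h3
    have h4 : ((1 : Matrix n n ℂ) - P) *ᵥ u = u - P *ᵥ u := by
      rw [Matrix.sub_mulVec, one_mulVec]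
    have h5 : star u ⬝ᵥ ((1 : Matrix n n ℂ) - P) *ᵥ u
        = 1 - star u ⬝ᵥ P *ᵥ u := by
      rw [h4, dotProduct_sub, hu]
    have h6 : 0 ≤ (star u ⬝ᵥ ((1 : Matrix n n ℂ) - P) *ᵥ u).re := by
      rw [← h3, norm_quad]
      rw [Complex.ofReal_re]
      exact Finset.sum_nonneg fun j _ => Complex.normSq_nonneg _
    rw [h5] at h6
    simp only [Complex.sub_re, Complex.one_re] at h6
    linarith
  have hsum : ∑ j, Complex.normSq (z j) ≤ 1 := by
    have h7 := norm_quad z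
    rw [hnz] at h7
    have h8 : (star u ⬝ᵥ P *ᵥ u).re = ∑ j, Complex.normSq (z j) := by
      rw [h7, Complex.ofReal_re]
    linarith [hPle, h8.symm.le]
  rw [e1, e2]
  have hYnn : 0 ≤ ∑ j, g j * Complex.normSq (z j) :=
    Finset.sum_nonneg fun j _ =>
      mul_nonneg (hA.eigenvalues_nonneg j) (Complex.normSq_nonneg _)
  rw [max_eq_left hYnn]
  have := jensen_rpow (fun j => Complex.normSq (z j)) g
    (fun j => Complex.normSq_nonneg _) (fun j => hA.eigenvalues_nonneg j) hsum hr0 hr1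
  calc ∑ j, g j ^ r * Complex.normSq (z j)
      = ∑ j, Complex.normSq (z j) * g j ^ r := by
        exact Finset.sum_congr rfl fun j _ => mul_comm _ _
    _ ≤ (∑ j, Complex.normSq (z j) * g j) ^ r := this
    _ = (∑ j, g j * Complex.normSq (z j)) ^ r := by
        congr 1
        exact Finset.sum_congr rfl fun j _ => mul_comm _ _

lemma block_mono {P : Matrix n n ℂ} (hP1 : P.IsHermitian) (hP2 : P * P = P)
    {ρ : Matrix n n ℂ} (hρ : ρ.PosSemidef) {α₁ α₂ : ℝ}
    (h1 : 0 < α₁) (h12 : α₁ ≤ α₂) (h2 : α₂ < 1) :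
    retr (mpow (P * mpow ρ α₁ * P) (1 / α₁)) ≤
      retr (mpow (P * mpow ρ α₂ * P) (1 / α₂)) := by
  have hα₂ : 0 < α₂ := lt_of_lt_of_le h1 h12
  set r := α₁ / α₂ with hrdef
  have hr0 : 0 < r := div_pos h1 hα₂
  have hr1 : r ≤ 1 := (div_le_one hα₂).mpr h12
  have hA : (mpow ρ α₂).PosSemidef := posSemidef_mpow hρ α₂
  have hα₁' : α₁ ≠ 0 := h1.ne'
  have hα₂' : α₂ ≠ 0 := hα₂.ne'
  have hab : α₂ * r = α₁ := by
    rw [hrdef]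
    field_simp
  have hmm : mpow ρ α₁ = mpow (mpow ρ α₂) r := by
    rw [mpow_mpow hρ hα₂ hr0, hab]
  have hAr : (mpow (mpow ρ α₂) r).PosSemidef := posSemidef_mpow hA r
  have hX : (P * mpow ρ α₁ * P).PosSemidef := by
    rw [hmm]
    have h := hAr.mul_mul_conjTranspose_same P
    rwa [hP1] at h
  have hY : (P * mpow ρ α₂ * P).PosSemidef := by
    have h := hA.mul_mul_conjTranspose_same P
    rwa [hP1] at h
  have hφ : Monotone (fun t : ℝ => (t ⊔ 0) ^ r) := fun a b hab =>
    Real.rpow_le_rpow (le_max_right a 0) (max_le_max hab le_rfl) hr0.le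
  have hψ : Monotone (fun t : ℝ => (t ⊔ 0) ^ (1/α₁)) := fun a b hab =>
    Real.rpow_le_rpow (le_max_right a 0) (max_le_max hab le_rfl) (by positivity)
  have hyp : ∀ u : n → ℂ, star u ⬝ᵥ u = 1 →
      (star u ⬝ᵥ (P * mpow ρ α₁ * P) *ᵥ u).re ≤
        (fun t : ℝ => (t ⊔ 0) ^ r) ((star u ⬝ᵥ (P * mpow ρ α₂ * P) *ᵥ u).re) := by
    intro u hu
    rw [hmm]
    exact quad_hyp hA hP1 hP2 hr0 hr1 u hu
  have hdom := eig_dominate hX.1 hY.1 (fun t : ℝ => (t ⊔ 0) ^ r) hφ hyp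
    (fun t : ℝ => (t ⊔ 0) ^ (1/α₁)) hψ
  have eqL : ∑ j, (fun t : ℝ => (t ⊔ 0) ^ (1/α₁)) (hX.1.eigenvalues j)
      = ∑ j, hX.1.eigenvalues j ^ (1/α₁) :=
    Finset.sum_congr rfl fun j _ => by
      simp only [max_eq_left (hX.eigenvalues_nonneg j)]
  have hro : r * (1/α₁) = 1/α₂ := by
    rw [hrdef]
    field_simp
  have eqR : ∑ j, (fun t : ℝ => (t ⊔ 0) ^ (1/α₁)) ((fun t : ℝ => (t ⊔ 0) ^ r) (hY.1.eigenvalues j))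
      = ∑ j, hY.1.eigenvalues j ^ (1/α₂) :=
    Finset.sum_congr rfl fun j _ => by
      simp only [max_eq_left (hY.eigenvalues_nonneg j),
        max_eq_left (Real.rpow_nonneg (hY.eigenvalues_nonneg j) r),
        ← Real.rpow_mul (hY.eigenvalues_nonneg j), hro]
  calc retr (mpow (P * mpow ρ α₁ * P) (1 / α₁))
      = ∑ j, hX.1.eigenvalues j ^ (1/α₁) := retr_mpow hX.1 (1/α₁)
    _ = ∑ j, (fun t : ℝ => (t ⊔ 0) ^ (1/α₁)) (hX.1.eigenvalues j) := eqL.symm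
    _ ≤ ∑ j, (fun t : ℝ => (t ⊔ 0) ^ (1/α₁))
          ((fun t : ℝ => (t ⊔ 0) ^ r) (hY.1.eigenvalues j)) := hdom
    _ = ∑ j, hY.1.eigenvalues j ^ (1/α₂) := eqR
    _ = retr (mpow (P * mpow ρ α₂ * P) (1 / α₂)) := (retr_mpow hY.1 (1/α₂)).symm

/-- for `0 < α₁ ≤ α₂ < 1`,
`Σ_i Tr[(P_i ρ^{α₁} P_i)^{1/α₁}] ≤ Σ_i Tr[(P_i ρ^{α₂} P_i)^{1/α₂}]`;
equivalently `C_{α₁,1}(ρ,P) ≥ C_{α₂,1}(ρ,P)`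
where `C_{α,1}(ρ,P) = 1 - Σ_i Tr[(P_i ρ^{α} P_i)^{1/α}]`. -/
theorem Caz_one_antitone_in_alpha
    {K : Type*} [Fintype K]
    (P : K → Matrix n n ℂ) (hP : IsProjFamily P)
    (ρ : Matrix n n ℂ) (hρ : IsDensityMatrix ρ)
    (α₁ α₂ : ℝ) (h1 : 0 < α₁) (h12 : α₁ ≤ α₂) (h2 : α₂ < 1) :
    (∑ i, retr (mpow (P i * mpow ρ α₁ * P i) (1 / α₁)) ≤
      ∑ i, retr (mpow (P i * mpow ρ α₂ * P i) (1 / α₂))) ∧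
    (1 - ∑ i, retr (mpow (P i * mpow ρ α₂ * P i) (1 / α₂)) ≤
      1 - ∑ i, retr (mpow (P i * mpow ρ α₁ * P i) (1 / α₁))) := by
  obtain ⟨hHerm, hIdem, -, -⟩ := hP
  have main : ∀ i, retr (mpow (P i * mpow ρ α₁ * P i) (1 / α₁)) ≤
      retr (mpow (P i * mpow ρ α₂ * P i) (1 / α₂)) :=
    fun i => block_mono (hHerm i) (hIdem i) hρ.1 h1 h12 h2
  have hsum : ∑ i, retr (mpow (P i * mpow ρ α₁ * P i) (1 / α₁)) ≤
      ∑ i, retr (mpow (P i * mpow ρ α₂ * P i) (1 / α₂)) :=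
    Finset.sum_le_sum fun i _ => main i
  exact ⟨hsum, by linarith⟩


end BlockCoherence
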